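/- Let ℓ ≥ 1, q = 2^ℓ, let r be an integer with 1 ≤ r ≤ q/2, and set s = ⌊log₂ r⌋. Then 4·|S*(ℓ; r)| > r² · |S_0(ℓ − s; 1)|. Moreover, if r is a power of 2 (so that s = log₂ r), then |S*(ℓ; r)| ≥ r² · |S_0(ℓ − s; 1)|. -/

import Mathlib

/-- `u ≤₂ v`: every binary digit of `u` is at most the corresponding binary digit
of `v` (the 2-shadow relation). -/
def le2 (u v : ℕ) : Prop := ∀ k, u.testBit k = true → v.testBit k = true

/-- The set `S_t(ℓ; r)` of pairs `(a, b)` with `0 ≤ a, b ≤ 2^ℓ − 1` for which there exist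
`i ≤₂ b`, `j ≤₂ (b − i)` and `1 ≤ r' ≤ r` with `2i + j + a = (t+1)·2^ℓ − r'`. -/
def Sset (ℓ r t : ℕ) : Set (ℕ × ℕ) :=
  {p | p.1 ≤ 2 ^ ℓ - 1 ∧ p.2 ≤ 2 ^ ℓ - 1 ∧
    ∃ i j r' : ℕ, le2 i p.2 ∧ le2 j (p.2 - i) ∧ 1 ≤ r' ∧ r' ≤ r ∧
      2 * i + j + p.1 = (t + 1) * 2 ^ ℓ - r'}

/-- The set `S*(ℓ; r)` of pairs `(a, b)` with `0 ≤ a, b ≤ 2^ℓ − 1` for which there exist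
`i ≤₂ b`, `j ≤₂ (b − i)`, `t ≥ 0` and `1 ≤ r' ≤ r` with
`2i + j + a = 2^ℓ − r' + t·(2^ℓ − 1)`. -/
def SstarSet (ℓ r : ℕ) : Set (ℕ × ℕ) :=
  {p | p.1 ≤ 2 ^ ℓ - 1 ∧ p.2 ≤ 2 ^ ℓ - 1 ∧
    ∃ i j t r' : ℕ, le2 i p.2 ∧ le2 j (p.2 - i) ∧ 1 ≤ r' ∧ r' ≤ r ∧
      2 * i + j + p.1 = 2 ^ ℓ - r' + t * (2 ^ ℓ - 1)}

lemma le2_le {u v : ℕ} (h : le2 u v) : u ≤ v := by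
  have huv : u &&& v = u := by
    apply Nat.eq_of_testBit_eq
    intro k
    rw [Nat.testBit_and]
    cases hu : u.testBit k
    · simp
    · simp [h k hu]
  calc u = u &&& v := huv.symm
    _ ≤ v := Nat.and_le_right

lemma testBit_mul_pow (i s k : ℕ) :
    (i * 2 ^ s).testBit k = (decide (k ≥ s) && i.testBit (k - s)) := by
  rw [← Nat.shiftLeft_eq, Nat.testBit_shiftLeft]

lemma testBit_high {b y s k : ℕ} (hy : y < 2 ^ s) (hk : s ≤ k) :
    (b * 2 ^ s + y).testBit k = b.testBit (k - s) := by
  have hdiv : (b * 2 ^ s + y) / 2 ^ k = b / 2 ^ (k - s) := by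
    have h1 : (2 : ℕ) ^ k = 2 ^ s * 2 ^ (k - s) := by
      rw [← pow_add]; congr 1; omega
    rw [h1, ← Nat.div_div_eq_div_mul]
    congr 1
    rw [add_comm, Nat.add_mul_div_right _ _ (Nat.two_pow_pos s),
      Nat.div_eq_of_lt hy, zero_add]
  rw [Nat.testBit_eq_decide_div_mod_eq, Nat.testBit_eq_decide_div_mod_eq, hdiv]

lemma le2_shift {i b y s : ℕ} (hy : y < 2 ^ s) (h : le2 i b) :
    le2 (i * 2 ^ s) (b * 2 ^ s + y) := by
  intro k hk
  rw [testBit_mul_pow] at hk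
  have hks : s ≤ k := by
    by_contra hc
    simp [hc] at hk
  rw [Bool.and_eq_true] at hk
  rw [testBit_high hy hks]
  exact h _ hk.2

lemma mem_star (ℓ s x y a' b' r : ℕ) (hs : s ≤ ℓ) (hr : 2 ^ s ≤ r)
    (hx : x < 2 ^ s) (hy : y < 2 ^ s) (h : (a', b') ∈ Sset (ℓ - s) 1 0) :
    (a' * 2 ^ s + x, b' * 2 ^ s + y) ∈ SstarSet ℓ r := by
  obtain ⟨ha', hb', i', j', r'', hi', hj', hr1'', hr2'', heq⟩ := h
  have hr'' : r'' = 1 := le_antisymm hr2'' hr1''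
  subst hr''
  simp only at ha' hb' heq
  have hPQ : 2 ^ (ℓ - s) * 2 ^ s = 2 ^ ℓ := by
    rw [← pow_add]; congr 1; omega
  have hP1 : 1 ≤ 2 ^ (ℓ - s) := Nat.one_le_two_pow
  have hQP : 2 ^ s ≤ 2 ^ ℓ := Nat.pow_le_pow_right (by norm_num) hs
  have heq' : 2 * i' + j' + a' = 2 ^ (ℓ - s) - 1 := by
    simpa using heq
  have hi'b' : i' ≤ b' := le2_le hi'
  have hmulle : ∀ u v : ℕ, u ≤ v → u * 2 ^ s ≤ v * 2 ^ s := fun u v huv =>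
    Nat.mul_le_mul_right _ huv
  constructor
  · -- a' * 2^s + x ≤ 2^ℓ - 1
    have h1 : a' * 2 ^ s ≤ (2 ^ (ℓ - s) - 1) * 2 ^ s := hmulle _ _ ha'
    rw [Nat.sub_mul, hPQ, one_mul] at h1
    simp only
    omega
  constructor
  · have h1 : b' * 2 ^ s ≤ (2 ^ (ℓ - s) - 1) * 2 ^ s := hmulle _ _ hb'
    rw [Nat.sub_mul, hPQ, one_mul] at h1
    simp only
    omega
  refine ⟨i' * 2 ^ s, j' * 2 ^ s, 0, 2 ^ s - x, ?_, ?_, by omega, by omega, ?_⟩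
  · exact le2_shift hy hi'
  · have hsub : b' * 2 ^ s + y - i' * 2 ^ s = (b' - i') * 2 ^ s + y := by
      have := hmulle _ _ hi'b'
      rw [Nat.sub_mul]
      omega
    simp only
    rw [hsub]
    exact le2_shift hy hj'
  · -- 2 * (i'*2^s) + j'*2^s + (a'*2^s + x) = 2^ℓ - (2^s - x) + 0 * (2^ℓ - 1)
    have hsum : (2 * i' + j' + a') * 2 ^ s = (2 ^ (ℓ - s) - 1) * 2 ^ s := by
      rw [heq']
    rw [Nat.sub_mul, hPQ, one_mul] at hsum
    simp only
    -- LHS = (2*i'+j'+a') * 2^s + x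
    have hlhs : 2 * (i' * 2 ^ s) + j' * 2 ^ s + (a' * 2 ^ s + x)
        = (2 * i' + j' + a') * 2 ^ s + x := by ring
    rw [hlhs, hsum]
    omega

lemma finite_star (ℓ r : ℕ) : (SstarSet ℓ r).Finite := by
  apply Set.Finite.subset ((Set.finite_Iic (2 ^ ℓ - 1)).prod (Set.finite_Iic (2 ^ ℓ - 1)))
  rintro ⟨a, b⟩ ⟨h1, h2, _⟩
  exact ⟨h1, h2⟩

lemma finite_S (ℓ r t : ℕ) : (Sset ℓ r t).Finite := by
  apply Set.Finite.subset ((Set.finite_Iic (2 ^ ℓ - 1)).prod (Set.finite_Iic (2 ^ ℓ - 1)))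
  rintro ⟨a, b⟩ ⟨h1, h2, _⟩
  exact ⟨h1, h2⟩

lemma key (ℓ s r : ℕ) (hs : s ≤ ℓ) (hr : 2 ^ s ≤ r) :
    2 ^ s * 2 ^ s * Nat.card ↥(Sset (ℓ - s) 1 0) ≤ Nat.card ↥(SstarSet ℓ r) := by
  have hfin : Finite ↥(SstarSet ℓ r) := (finite_star ℓ r).to_subtype
  set Q := 2 ^ s with hQ
  have hQpos : 0 < Q := Nat.two_pow_pos s
  let f : ↥(Sset (ℓ - s) 1 0) × Fin Q × Fin Q → ↥(SstarSet ℓ r) :=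
    fun z => ⟨(z.1.1.1 * Q + z.2.1.1, z.1.1.2 * Q + z.2.2.1),
      mem_star ℓ s z.2.1.1 z.2.2.1 z.1.1.1 z.1.1.2 r hs hr z.2.1.2 z.2.2.2
        (by exact z.1.2)⟩
  have hinj : Function.Injective f := by
    rintro ⟨⟨⟨a1, b1⟩, h1⟩, ⟨x1, hx1⟩, ⟨y1, hy1⟩⟩ ⟨⟨⟨a2, b2⟩, h2⟩, ⟨x2, hx2⟩, ⟨y2, hy2⟩⟩ hfe
    simp only [f, Subtype.mk.injEq, Prod.mk.injEq] at hfe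
    obtain ⟨e1, e2⟩ := hfe
    have ha : a1 = a2 ∧ x1 = x2 := by
      have m1 : (a1 * Q + x1) % Q = x1 := by
        rw [add_comm, Nat.add_mul_mod_self_right, Nat.mod_eq_of_lt hx1]
      have m2 : (a2 * Q + x2) % Q = x2 := by
        rw [add_comm, Nat.add_mul_mod_self_right, Nat.mod_eq_of_lt hx2]
      have hxx : x1 = x2 := by rw [← m1, ← m2, e1]
      constructor
      · have := e1
        rw [hxx] at this
        have := Nat.eq_of_mul_eq_mul_right hQpos (by omega : a1 * Q = a2 * Q)
        exact this
      · exact hxx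
    have hb : b1 = b2 ∧ y1 = y2 := by
      have m1 : (b1 * Q + y1) % Q = y1 := by
        rw [add_comm, Nat.add_mul_mod_self_right, Nat.mod_eq_of_lt hy1]
      have m2 : (b2 * Q + y2) % Q = y2 := by
        rw [add_comm, Nat.add_mul_mod_self_right, Nat.mod_eq_of_lt hy2]
      have hyy : y1 = y2 := by rw [← m1, ← m2, e2]
      constructor
      · have := e2
        rw [hyy] at this
        exact Nat.eq_of_mul_eq_mul_right hQpos (by omega : b1 * Q = b2 * Q)
      · exact hyy
    obtain ⟨ha1, hx⟩ := ha
    obtain ⟨hb1, hy⟩ := hb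
    subst ha1; subst hx; subst hb1; subst hy
    rfl
  have hcard := Nat.card_le_card_of_injective f hinj
  simp only [Nat.card_prod, Nat.card_eq_fintype_card, Fintype.card_prod, Fintype.card_fin] at hcard
  calc Q * Q * Nat.card ↥(Sset (ℓ - s) 1 0)
      = Nat.card ↥(Sset (ℓ - s) 1 0) * (Q * Q) := by ring
    _ ≤ Nat.card ↥(SstarSet ℓ r) := hcard

lemma S0_nonempty (ℓ' : ℕ) : (2 ^ ℓ' - 1, 0) ∈ Sset ℓ' 1 0 := by
  refine ⟨le_refl _, Nat.zero_le _, 0, 0, 1, ?_, ?_, le_refl _, le_refl _, ?_⟩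
  · intro k hk; simp [Nat.zero_testBit] at hk
  · intro k hk; simp [Nat.zero_testBit] at hk
  · simp

/-- With `s = ⌊log₂ r⌋`, `4·|S*(ℓ; r)| > r²·|S₀(ℓ−s; 1)|`; and if `r`
is a power of two then `|S*(ℓ; r)| ≥ r²·|S₀(ℓ−s; 1)|`. -/
theorem stmt_15 (ℓ r : ℕ) (hℓ : 1 ≤ ℓ) (hr1 : 1 ≤ r) (hr2 : 2 * r ≤ 2 ^ ℓ) :
    r ^ 2 * Nat.card ↥(Sset (ℓ - Nat.log 2 r) 1 0) < 4 * Nat.card ↥(SstarSet ℓ r) ∧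
      ((∃ m : ℕ, r = 2 ^ m) →
        r ^ 2 * Nat.card ↥(Sset (ℓ - Nat.log 2 r) 1 0) ≤ Nat.card ↥(SstarSet ℓ r)) := by
  set s := Nat.log 2 r with hsdef
  have hsℓ : s ≤ ℓ := by
    have h1 : r ≤ 2 ^ (ℓ - 1) := by
      have : 2 ^ ℓ = 2 * 2 ^ (ℓ - 1) := by
        rw [← pow_succ']
        congr 1
        omega
      omega
    have h2 : s ≤ Nat.log 2 (2 ^ (ℓ - 1)) := Nat.log_mono_right h1
    rw [Nat.log_pow (by norm_num)] at h2
    omega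
  have hQr : 2 ^ s ≤ r := Nat.pow_log_le_self 2 (by omega)
  have hkey := key ℓ s r hsℓ hQr
  have hfin0 : Finite ↥(Sset (ℓ - s) 1 0) := (finite_S (ℓ - s) 1 0).to_subtype
  have hne0 : Nonempty ↥(Sset (ℓ - s) 1 0) := ⟨⟨_, S0_nonempty (ℓ - s)⟩⟩
  have hc0pos : 0 < Nat.card ↥(Sset (ℓ - s) 1 0) := Nat.card_pos
  constructor
  · -- r^2 < 4 * (2^s * 2^s)
    have hrlt : r < 2 ^ (s + 1) := Nat.lt_pow_succ_log_self (by norm_num) r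
    have hrsq : r ^ 2 < 4 * (2 ^ s * 2 ^ s) := by
      have h1 : r ^ 2 < (2 ^ (s + 1)) ^ 2 :=
        Nat.pow_lt_pow_left hrlt (by norm_num)
      have h2 : (2 ^ (s + 1)) ^ 2 = 4 * (2 ^ s * 2 ^ s) := by ring
      omega
    calc r ^ 2 * Nat.card ↥(Sset (ℓ - s) 1 0)
        < 4 * (2 ^ s * 2 ^ s) * Nat.card ↥(Sset (ℓ - s) 1 0) :=
          (Nat.mul_lt_mul_right hc0pos).mpr hrsq
      _ = 4 * (2 ^ s * 2 ^ s * Nat.card ↥(Sset (ℓ - s) 1 0)) := by ring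
      _ ≤ 4 * Nat.card ↥(SstarSet ℓ r) := by omega
  · rintro ⟨m, rfl⟩
    have hsm : s = m := by rw [hsdef, Nat.log_pow (by norm_num)]
    have : (2 ^ m) ^ 2 = 2 ^ s * 2 ^ s := by rw [hsm]; ring
    rw [this]
    exact hkey
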